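/- Let n ≥ 1 and let f : ℝ → ℝ be a continuous function. Then f is (the evaluation of) a real polynomial of degree less than n if and only if for every x₀ ∈ ℝ and all x⁺, x⁻ : Fin n → ℝ one has ∑_{ε ∈ ({-1,1})^n} sign(ε) · f(x₀ + ∑_{i} x^{ε_i}_i) = 0, where sign(ε) := ∏_i ε_i and x^{ε_i}_i denotes x⁺_i if ε_i = 1 and x⁻_i if ε_i = -1. -/

import Mathlib

open scoped BigOperators

open fwdDiff Polynomial Finset

namespace FrechetAux

/-- Iterated difference operator with (possibly different) steps `h i`. -/
def iterD : (n : ℕ) → (Fin n → ℝ) → (ℝ → ℝ) → (ℝ → ℝ)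
  | 0, _, g => g
  | (n+1), h, g => iterD n (fun i => h i.succ) (fwdDiff (h 0) g)

lemma iterD_const (δ : ℝ) : ∀ (n : ℕ) (g : ℝ → ℝ), iterD n (fun _ => δ) g = (fwdDiff δ)^[n] g
  | 0, g => rfl
  | (n+1), g => by
      rw [show iterD (n+1) (fun _ => δ) g = iterD n (fun _ => δ) (fwdDiff δ g) from rfl,
        iterD_const δ n (fwdDiff δ g), ← Function.iterate_succ_apply]

/-- The alternating sum equals an iterated difference. -/
lemma sum_eq_iterD : ∀ (n : ℕ) (g : ℝ → ℝ) (x₀ : ℝ) (xp xm : Fin n → ℝ),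
    (∑ ε : Fin n → Bool, (∏ i, if ε i then (1:ℝ) else -1) *
      g (x₀ + ∑ i, if ε i then xp i else xm i))
    = iterD n (fun i => xp i - xm i) g (x₀ + ∑ i, xm i)
  | 0, g, x₀, xp, xm => by simp [iterD]
  | (n+1), g, x₀, xp, xm => by
    rw [show (x₀ + ∑ i : Fin (n+1), xm i) = (x₀ + xm 0) + ∑ i : Fin n, xm i.succ from by
        rw [Fin.sum_univ_succ]; ring]
    rw [show iterD (n+1) (fun i => xp i - xm i) g
        = iterD n (fun i => xp i.succ - xm i.succ) (fwdDiff (xp 0 - xm 0) g) from rfl]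
    rw [← sum_eq_iterD n (fwdDiff (xp 0 - xm 0) g) (x₀ + xm 0)
        (fun i => xp i.succ) (fun i => xm i.succ)]
    rw [← Equiv.sum_comp (Fin.consEquiv fun _ : Fin (n+1) => Bool)
      (fun ε : Fin (n+1) → Bool => (∏ i, if ε i then (1:ℝ) else -1) *
        g (x₀ + ∑ i, if ε i then xp i else xm i)), Fintype.sum_prod_type]
    rw [Fintype.sum_bool]
    simp only [Fin.consEquiv_apply, Fin.prod_univ_succ, Fin.sum_univ_succ,
      Fin.cons_zero, Fin.cons_succ, if_true, if_false, one_mul, neg_one_mul, neg_mul]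
    rw [← Finset.sum_add_distrib]
    refine Finset.sum_congr rfl fun ε _ => ?_
    simp only [fwdDiff]
    norm_num
    rw [show x₀ + xm 0 + (∑ i : Fin n, if ε i then xp i.succ else xm i.succ) + (xp 0 - xm 0)
        = x₀ + (xp 0 + ∑ i : Fin n, if ε i then xp i.succ else xm i.succ) from by ring]
    ring

/-- Polynomials of degree `< n` are killed by `n`-fold differencing. -/
lemma iterD_poly_eq_zero : ∀ (n : ℕ) (P : ℝ[X]), P.degree < (n : ℕ) →
    ∀ (h : Fin n → ℝ) (x : ℝ), iterD n h (fun y => P.eval y) x = 0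
  | 0, P, hP, h, x => by
    have : P = 0 := by
      rw [← Polynomial.degree_eq_bot, ← Nat.WithBot.lt_zero_iff]
      exact_mod_cast hP
    simp [iterD, this]
  | (n+1), P, hP, h, x => by
    have hred : iterD (n+1) h (fun y => P.eval y) x
        = iterD n (fun i => h i.succ)
            (fun y => (P.comp (X + C (h 0)) - P).eval y) x := by
      rw [show iterD (n+1) h (fun y => P.eval y)
          = iterD n (fun i => h i.succ) (fwdDiff (h 0) fun y => P.eval y) from rfl]
      congr 1
      funext y
      simp [fwdDiff, Polynomial.eval_comp]
    rw [hred]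
    by_cases hP0 : P = 0
    · refine iterD_poly_eq_zero n _ ?_ _ _
      rw [hP0]
      simp
    · refine iterD_poly_eq_zero n _ ?_ _ _
      set a := h 0
      have hcomp : P.comp (X + C a) = Polynomial.taylor a P := (Polynomial.taylor_apply a P).symm
      have hnd : (P.comp (X + C a)).natDegree = P.natDegree := by
        rw [hcomp]; exact Polynomial.natDegree_taylor P a
      have hlc : (P.comp (X + C a)).leadingCoeff = P.leadingCoeff := by
        rw [Polynomial.leadingCoeff_comp (by simp [Polynomial.natDegree_X_add_C])]
        simp
      have hc0 : P.comp (X + C a) ≠ 0 := by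
        intro hc
        apply hP0
        rw [← Polynomial.leadingCoeff_eq_zero, ← hlc, hc, Polynomial.leadingCoeff_zero]
      have hdeg : (P.comp (X + C a)).degree = P.degree := by
        rw [Polynomial.degree_eq_natDegree hc0, Polynomial.degree_eq_natDegree hP0, hnd]
      have hlt : (P.comp (X + C a) - P).degree < P.degree :=
        hdeg ▸ Polynomial.degree_sub_lt hdeg hc0 hlc
      have hPn : P.degree ≤ (n : ℕ) := by
        rw [Polynomial.degree_eq_natDegree hP0] at hP ⊢
        exact_mod_cast Nat.lt_succ_iff.mp (by exact_mod_cast hP)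
      exact lt_of_lt_of_le hlt hPn

/-- Relation between discrete differences along a grid and real differences. -/
lemma grid_diff : ∀ (n : ℕ) (G : ℝ → ℝ) (δ : ℝ) (j : ℤ),
    (fwdDiff (1:ℤ))^[n] (fun i : ℤ => G (i * δ)) j = (fwdDiff δ)^[n] G (j * δ)
  | 0, G, δ, j => by simp
  | (n+1), G, δ, j => by
    rw [Function.iterate_succ_apply, Function.iterate_succ_apply]
    rw [show fwdDiff (1:ℤ) (fun i : ℤ => G (i * δ)) = fun i : ℤ => (fwdDiff δ G) (i * δ) from by
      funext i
      simp only [fwdDiff]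
      congr 2
      push_cast
      ring]
    exact grid_diff n (fwdDiff δ G) δ j

/-- A sequence with vanishing `n`-th differences that vanishes at `n` consecutive points
vanishes identically. -/
lemma seq_zero : ∀ (n : ℕ) (c : ℤ → ℝ), (∀ j, (fwdDiff (1:ℤ))^[n] c j = 0) →
    (∀ k : ℕ, k < n → c k = 0) → ∀ j, c j = 0
  | 0, c, hd, _, j => by simpa using hd j
  | (n+1), c, hd, hz, j => by
    have hstep : ∀ i : ℤ, c (i + 1) = c i := by
      have hdz : ∀ i, fwdDiff (1:ℤ) c i = 0 := by
        refine seq_zero n (fwdDiff (1:ℤ) c) (fun i => ?_) (fun k hk => ?_)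
        · rw [← Function.iterate_succ_apply]; exact hd i
        · have h1 : c ((k:ℤ) + 1) = 0 := by
            have := hz (k+1) (by omega); exact_mod_cast this
          have h2 : c (k:ℤ) = 0 := hz k (by omega)
          simp [fwdDiff, h1, h2]
      intro i
      have := hdz i
      simp only [fwdDiff] at this
      linarith
    have h0 : c 0 = 0 := by exact_mod_cast hz 0 (by omega)
    induction j using Int.induction_on with
    | zero => exact h0
    | succ k ih => rw [hstep]; exact ih
    | pred k ih => rw [← ih, ← hstep (-(k:ℤ) - 1)]; norm_num

end FrechetAux

open FrechetAux

/-- Fréchet's theorem (1912): a continuous function `f : ℝ → ℝ` is a polynomial of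
degree less than `n` iff all alternating sums of order `n` vanish. -/
theorem frechet_polynomial_characterization (n : ℕ) (hn : 1 ≤ n)
    (f : ℝ → ℝ) (hf : Continuous f) :
    (∃ P : Polynomial ℝ, P.degree < (n : ℕ) ∧ f = fun x => P.eval x) ↔
      (∀ (x₀ : ℝ) (xp xm : Fin n → ℝ),
        ∑ ε : Fin n → Bool,
          (∏ i, if ε i then (1 : ℝ) else -1) *
            f (x₀ + ∑ i, if ε i then xp i else xm i) = 0) := by
  constructor
  · rintro ⟨P, hP, rfl⟩ x₀ xp xm
    rw [sum_eq_iterD n (fun y => P.eval y) x₀ xp xm]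
    exact iterD_poly_eq_zero n P hP _ _
  · intro H
    -- Step 1: all `n`-th order equal-step differences of `f` vanish.
    have key : ∀ (δ x : ℝ), (fwdDiff δ)^[n] f x = 0 := by
      intro δ x
      have h1 := H x (fun _ => δ) (fun _ => 0)
      rw [sum_eq_iterD] at h1
      simpa [iterD_const] using h1
    -- The interpolating polynomial at `0, 1, ..., n-1`.
    have hinj : Set.InjOn (fun k : ℕ => (k : ℝ)) (Finset.range n) :=
      fun a _ b _ hab => Nat.cast_injective hab
    set P : ℝ[X] := Lagrange.interpolate (Finset.range n) (fun k : ℕ => (k : ℝ))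
      (fun k => f k) with hPdef
    have hPdeg : P.degree < (n : ℕ) := by
      rw [hPdef]
      simpa using Lagrange.degree_interpolate_lt _ hinj
    set g : ℝ → ℝ := fun x => f x - P.eval x with hgdef
    have hg0 : ∀ k : ℕ, k < n → g k = 0 := by
      intro k hk
      have h1 := Lagrange.eval_interpolate_at_node (fun k : ℕ => f k) hinj
        (Finset.mem_range.mpr hk)
      rw [← hPdef] at h1
      simp only [hgdef]
      rw [h1]
      ring
    have hPkey : ∀ (δ x : ℝ), (fwdDiff δ)^[n] (fun y => P.eval y) x = 0 := by
      intro δ x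
      rw [← iterD_const]
      exact iterD_poly_eq_zero n P hPdeg _ _
    have hgkey : ∀ (δ x : ℝ), (fwdDiff δ)^[n] g x = 0 := by
      intro δ x
      have hsplit : g = f + (-1 : ℝ) • (fun y => P.eval y) := by
        funext y; simp [hgdef]; ring
      rw [hsplit, fwdDiff_iter_add, fwdDiff_iter_const_smul]
      simp only [Pi.add_apply, Pi.smul_apply, key, hPkey, smul_eq_mul]
      ring
    -- Step 2: `g` vanishes at all points `j / m`.
    have hgrid : ∀ (m : ℕ), 0 < m → ∀ j : ℤ, g (j * (1 / (m:ℝ))) = 0 := by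
      intro m hm
      set δ : ℝ := 1 / (m : ℝ) with hδ
      set a : ℤ → ℝ := fun j => g (j * δ) with hadef
      have haD : ∀ j, (fwdDiff (1:ℤ))^[n] a j = 0 := fun j =>
        (grid_diff n g δ j).trans (hgkey δ _)
      set Q : ℝ[X] := Lagrange.interpolate (Finset.range n) (fun k : ℕ => (k : ℝ))
        (fun k => a k) with hQdef
      have hQdeg : Q.degree < (n : ℕ) := by
        rw [hQdef]
        simpa using Lagrange.degree_interpolate_lt _ hinj
      have hc : ∀ j : ℤ, a j - Q.eval (j : ℝ) = 0 := by
        refine seq_zero n (fun j => a j - Q.eval (j : ℝ)) (fun j => ?_) (fun k hk => ?_)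
        · have hsplit : (fun j : ℤ => a j - Q.eval (j : ℝ))
              = a + (-1 : ℝ) • (fun j : ℤ => Q.eval ((j : ℝ) * 1)) := by
            funext i; simp [sub_eq_add_neg]
          rw [hsplit, fwdDiff_iter_add, fwdDiff_iter_const_smul]
          have hQ0 : (fwdDiff (1:ℤ))^[n] (fun i : ℤ => Q.eval ((i : ℝ) * 1)) j = 0 := by
            rw [grid_diff n (fun y => Q.eval y) 1 j, ← iterD_const]
            exact iterD_poly_eq_zero n Q hQdeg _ _
          simp only [Pi.add_apply, Pi.smul_apply, haD, hQ0, smul_eq_mul]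
          ring
        · have h1 := Lagrange.eval_interpolate_at_node (fun k : ℕ => a k) hinj
            (Finset.mem_range.mpr hk)
          rw [← hQdef] at h1
          push_cast
          rw [h1]
          ring
      have haQ : ∀ j : ℤ, a j = Q.eval (j : ℝ) := fun j => sub_eq_zero.mp (hc j)
      have hroots : ∀ k : Fin n, Q.eval (((k : ℕ) * m : ℕ) : ℝ) = 0 := by
        intro k
        have h1 : ((( (k:ℕ) * m : ℕ) : ℤ) : ℝ) = (((k:ℕ) * m : ℕ) : ℝ) := by push_cast; ring
        rw [← h1, ← haQ]
        have h2 : ((((k:ℕ) * m : ℕ) : ℤ) : ℝ) * δ = ((k : ℕ) : ℝ) := by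
          rw [hδ]
          have hm' : (m : ℝ) ≠ 0 := Nat.cast_ne_zero.mpr hm.ne'
          push_cast
          field_simp
        rw [hadef]
        simp only []
        rw [h2]
        exact hg0 k k.2
      have hQzero : Q = 0 := by
        by_cases hQz : Q = 0
        · exact hQz
        · refine Polynomial.eq_zero_of_natDegree_lt_card_of_eval_eq_zero Q
            (f := fun k : Fin n => (((k : ℕ) * m : ℕ) : ℝ)) ?_ hroots ?_
          · intro k₁ k₂ hk
            have : (k₁ : ℕ) * m = (k₂ : ℕ) * m := Nat.cast_injective hk
            exact Fin.ext (Nat.eq_of_mul_eq_mul_right hm this)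
          · rw [Fintype.card_fin]
            exact (Polynomial.natDegree_lt_iff_degree_lt hQz).mpr hQdeg
      intro j
      have := haQ j
      rw [hQzero] at this
      simpa [hadef] using this
    -- Step 3: `g` vanishes on the rationals, hence everywhere by continuity.
    have hrat : ∀ q : ℚ, g (q : ℝ) = 0 := by
      intro q
      have h1 := hgrid q.den q.pos q.num
      have h2 : ((q : ℝ)) = (q.num : ℝ) * (1 / (q.den : ℝ)) := by
        rw [Rat.cast_def]; ring
      rw [h2]
      exact h1
    have hgc : Continuous g := by
      rw [hgdef]
      exact hf.sub P.continuous
    have hgzero : g = fun _ => (0 : ℝ) := by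
      refine Continuous.ext_on (Rat.denseRange_cast (𝕜 := ℝ)) hgc continuous_const ?_
      rintro x ⟨q, rfl⟩
      exact hrat q
    refine ⟨P, hPdeg, ?_⟩
    funext x
    have := congrFun hgzero x
    simp only [hgdef] at this
    linarith
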